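/- There exists a universal constant C > 0 such that for all sufficiently large n there exists a triangle-free graph G on [n] = {1,…,n} with no independent set of size ⌈C·√n·log n⌉. Equivalently, the Ramsey number satisfies r(3,k) = Ω(k²/log² k). -/

import Mathlib

open Finset

namespace Stmt11

open scoped Classical

section weights
variable {α : Type*} [DecidableEq α] (p q : ℝ)

/-- weight of an outcome `A ⊆ M` -/
noncomputable def wt (M A : Finset α) : ℝ := p ^ A.card * q ^ (M \ A).card

lemma sum_wt (M : Finset α) : ∑ A ∈ M.powerset, wt p q M A = (p + q) ^ M.card := by
  rw [← Finset.prod_const]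
  rw [Finset.prod_add]
  refine Finset.sum_congr rfl fun A hA => ?_
  simp [wt, Finset.prod_const]

lemma sum_wt_inter {B E M : Finset α} (hB : B ⊆ E) (hE : E ⊆ M) :
    ∑ A ∈ M.powerset.filter (fun A => A ∩ E = B), wt p q M A
      = p ^ B.card * q ^ (E \ B).card * (p + q) ^ (M \ E).card := by
  have key : ∑ A ∈ M.powerset.filter (fun A => A ∩ E = B), wt p q M A
      = ∑ C ∈ (M \ E).powerset, p ^ B.card * q ^ (E \ B).card * wt p q (M \ E) C := by
    refine Finset.sum_nbij' (fun A => A \ E) (fun C => B ∪ C) ?_ ?_ ?_ ?_ ?_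
    · intro A hA
      simp only [Finset.mem_filter, Finset.mem_powerset] at hA ⊢
      exact Finset.sdiff_subset_sdiff hA.1 (le_refl _)
    · intro C hC
      simp only [Finset.mem_filter, Finset.mem_powerset] at hC ⊢
      constructor
      · exact Finset.union_subset (hB.trans hE) (hC.trans Finset.sdiff_subset)
      · have hCE : C ∩ E = ∅ := by
          rw [← Finset.disjoint_iff_inter_eq_empty]
          exact Finset.disjoint_of_subset_left hC Finset.sdiff_disjoint
        rw [Finset.union_inter_distrib_right, Finset.inter_eq_left.2 hB, hCE, Finset.union_empty]
    · intro A hA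
      simp only [Finset.mem_filter, Finset.mem_powerset] at hA
      rw [← hA.2]
      ext x; simp only [Finset.mem_union, Finset.mem_inter, Finset.mem_sdiff]; tauto
    · intro C hC
      simp only [Finset.mem_powerset] at hC
      ext x
      simp only [Finset.mem_sdiff, Finset.mem_union]
      constructor
      · rintro ⟨h1 | h1, h2⟩
        · exact absurd (hB h1) h2
        · exact h1
      · intro hx
        exact ⟨Or.inr hx, (Finset.mem_sdiff.1 (hC hx)).2⟩
    · intro A hA
      simp only [Finset.mem_filter, Finset.mem_powerset] at hA
      obtain ⟨hAM, hAB⟩ := hA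
      have h1 : A.card = B.card + (A \ E).card := by
        rw [← hAB]; rw [Finset.card_inter_add_card_sdiff]
      have h2 : (M \ A) = (E \ B) ∪ ((M \ E) \ (A \ E)) := by
        ext x
        simp only [Finset.mem_sdiff, Finset.mem_union]
        constructor
        · rintro ⟨hxM, hxA⟩
          by_cases hxE : x ∈ E
          · left
            refine ⟨hxE, fun hxB => hxA ?_⟩
            rw [← hAB] at hxB; exact (Finset.mem_inter.1 hxB).1
          · right; exact ⟨⟨hxM, hxE⟩, fun h => hxA h.1⟩
        · rintro (⟨hxE, hxB⟩ | ⟨⟨hxM, hxE⟩, h⟩)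
          · refine ⟨hE hxE, fun hxA => hxB ?_⟩
            rw [← hAB]; exact Finset.mem_inter.2 ⟨hxA, hxE⟩
          · refine ⟨hxM, fun hxA => h ⟨hxA, hxE⟩⟩
      have h3 : (M \ A).card = (E \ B).card + ((M \ E) \ (A \ E)).card := by
        rw [h2]
        refine Finset.card_union_of_disjoint ?_
        refine Finset.disjoint_left.2 fun x hx hx2 => ?_
        exact (Finset.mem_sdiff.1 (Finset.mem_sdiff.1 hx2).1).2 ((Finset.mem_sdiff.1 hx).1)
      simp only [wt]
      rw [h1, h3]
      ring
  rw [key]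
  rw [← Finset.mul_sum, sum_wt]

lemma sum_wt_superset {E M : Finset α} (hE : E ⊆ M) :
    ∑ A ∈ M.powerset.filter (fun A => E ⊆ A), wt p q M A
      = p ^ E.card * (p + q) ^ (M \ E).card := by
  have : M.powerset.filter (fun A => E ⊆ A) = M.powerset.filter (fun A => A ∩ E = E) := by
    refine Finset.filter_congr fun A hA => ?_
    rw [Finset.inter_eq_right]
  rw [this, sum_wt_inter p q (le_refl E) hE]
  simp

lemma sum_wt_low {E M : Finset α} (hE : E ⊆ M) (hp : 0 ≤ p) (hq : 0 ≤ q) (m : ℕ) :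
    ∑ A ∈ M.powerset.filter (fun A => (A ∩ E).card < m), wt p q M A
      ≤ 2 ^ m * (p / 2 + q) ^ E.card * (p + q) ^ (M \ E).card := by
  have maps : ∀ A ∈ M.powerset.filter (fun A => (A ∩ E).card < m),
      A ∩ E ∈ E.powerset.filter (fun B => B.card < m) := by
    intro A hA
    simp only [Finset.mem_filter, Finset.mem_powerset] at hA ⊢
    exact ⟨Finset.inter_subset_right, hA.2⟩
  rw [← Finset.sum_fiberwise_of_maps_to maps]
  have step1 : ∀ B ∈ E.powerset.filter (fun B => B.card < m),
      ∑ A ∈ (M.powerset.filter (fun A => (A ∩ E).card < m)).filter (fun A => A ∩ E = B),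
        wt p q M A
      = p ^ B.card * q ^ (E \ B).card * (p + q) ^ (M \ E).card := by
    intro B hB
    simp only [Finset.mem_filter, Finset.mem_powerset] at hB
    have : (M.powerset.filter (fun A => (A ∩ E).card < m)).filter (fun A => A ∩ E = B)
        = M.powerset.filter (fun A => A ∩ E = B) := by
      rw [Finset.filter_filter]
      refine Finset.filter_congr fun A hA => ?_
      constructor
      · exact fun h => h.2
      · intro h; exact ⟨h ▸ hB.2, h⟩
    rw [this, sum_wt_inter p q hB.1 hE]
  rw [Finset.sum_congr rfl step1]
  calc ∑ B ∈ E.powerset.filter (fun B => B.card < m),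
        p ^ B.card * q ^ (E \ B).card * (p + q) ^ (M \ E).card
      ≤ ∑ B ∈ E.powerset.filter (fun B => B.card < m),
        2 ^ m * ((p/2) ^ B.card * q ^ (E \ B).card * (p + q) ^ (M \ E).card) := by
        refine Finset.sum_le_sum fun B hB => ?_
        simp only [Finset.mem_filter] at hB
        have h2 : p ^ B.card ≤ 2 ^ m * (p/2) ^ B.card := by
          have : p ^ B.card = 2 ^ B.card * (p/2) ^ B.card := by
            rw [← mul_pow]; ring_nf
          rw [this]
          refine mul_le_mul_of_nonneg_right ?_ (by positivity)
          exact pow_le_pow_right₀ one_le_two hB.2.le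
        calc p ^ B.card * q ^ (E \ B).card * (p + q) ^ (M \ E).card
            ≤ (2 ^ m * (p/2) ^ B.card) * q ^ (E \ B).card * (p + q) ^ (M \ E).card := by
              refine mul_le_mul_of_nonneg_right
                (mul_le_mul_of_nonneg_right h2 (by positivity)) (by positivity)
          _ = 2 ^ m * ((p/2) ^ B.card * q ^ (E \ B).card * (p + q) ^ (M \ E).card) := by ring
    _ ≤ ∑ B ∈ E.powerset,
        2 ^ m * ((p/2) ^ B.card * q ^ (E \ B).card * (p + q) ^ (M \ E).card) := by
        refine Finset.sum_le_sum_of_subset_of_nonneg (Finset.filter_subset _ _) ?_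
        intro B hB _
        positivity
    _ = 2 ^ m * (p / 2 + q) ^ E.card * (p + q) ^ (M \ E).card := by
        rw [← Finset.mul_sum]
        have : ∀ B ∈ E.powerset, (p/2) ^ B.card * q ^ (E \ B).card * (p + q) ^ (M \ E).card
            = wt (p/2) q E B * (p + q) ^ (M \ E).card := by intro B _; simp [wt]
        rw [Finset.sum_congr rfl this, ← Finset.sum_mul, sum_wt]
        ring

end weights


section unionbound
variable {α ι : Type*} [DecidableEq α]

lemma union_bound {P : Finset α} {s : Finset ι} {Q : ι → α → Prop} {w : α → ℝ}
    (hw : ∀ A ∈ P, 0 ≤ w A) (hcover : ∀ A ∈ P, ∃ x ∈ s, Q x A) :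
    ∑ A ∈ P, w A ≤ ∑ x ∈ s, ∑ A ∈ P, Set.indicator {A | Q x A} w A := by
  classical
  have h1 : ∑ A ∈ P, w A ≤ ∑ A ∈ P, ((s.filter (fun x => Q x A)).card : ℝ) * w A := by
    refine Finset.sum_le_sum fun A hA => ?_
    obtain ⟨x, hx, hQ⟩ := hcover A hA
    have hc : 1 ≤ (s.filter (fun x => Q x A)).card :=
      Finset.card_pos.2 ⟨x, Finset.mem_filter.2 ⟨hx, hQ⟩⟩
    nlinarith [hw A hA, (Nat.one_le_cast (α := ℝ)).2 hc]
  refine h1.trans ?_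
  have h3 : ∀ A ∈ P, ((s.filter (fun x => Q x A)).card : ℝ) * w A
      = ∑ x ∈ s, (if Q x A then w A else 0) := by
    intro A _
    rw [← Finset.sum_filter, Finset.sum_const, nsmul_eq_mul]
  rw [Finset.sum_congr rfl h3, Finset.sum_comm]
  refine Finset.sum_le_sum fun x _ => le_of_eq ?_
  refine Finset.sum_congr rfl fun A _ => ?_
  rw [Set.indicator_apply]
  rfl

end unionbound

section edg
variable {V : Type*} [DecidableEq V]

/-- the set of (non-loop) edges inside a finite vertex set -/
def edg (T : Finset V) : Finset (Sym2 V) := T.sym2.filter (fun e => ¬ e.IsDiag)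

lemma mem_edg_mk {T : Finset V} {a b : V} :
    s(a, b) ∈ edg T ↔ (a ∈ T ∧ b ∈ T) ∧ a ≠ b := by
  simp [edg, Finset.mk_mem_sym2_iff]

lemma edg_mono {T S : Finset V} (h : T ⊆ S) : edg T ⊆ edg S := by
  intro e he
  induction e with
  | _ a b =>
    rw [mem_edg_mk] at he ⊢
    exact ⟨⟨h he.1.1, h he.1.2⟩, he.2⟩

lemma edg_insert {a : V} {S : Finset V} (ha : a ∉ S) :
    edg (insert a S) = edg S ∪ S.image (fun b => s(a, b)) := by
  ext e
  induction e with
  | _ x y =>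
    simp only [mem_edg_mk, Finset.mem_union, Finset.mem_image, Finset.mem_insert]
    constructor
    · rintro ⟨⟨hx | hx, hy | hy⟩, hxy⟩
      · exact absurd (hx.trans hy.symm) hxy
      · subst hx; exact Or.inr ⟨y, hy, rfl⟩
      · subst hy; exact Or.inr ⟨x, hx, Sym2.eq_swap⟩
      · exact Or.inl ⟨⟨hx, hy⟩, hxy⟩
    · rintro (⟨⟨hx, hy⟩, hxy⟩ | ⟨b, hb, hsb⟩)
      · exact ⟨⟨Or.inr hx, Or.inr hy⟩, hxy⟩
      · rw [Sym2.eq_iff] at hsb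
        rcases hsb with ⟨rfl, rfl⟩ | ⟨rfl, rfl⟩
        · exact ⟨⟨Or.inl rfl, Or.inr hb⟩, fun h => ha (h ▸ hb)⟩
        · exact ⟨⟨Or.inr hb, Or.inl rfl⟩, fun h => ha (h ▸ hb)⟩

lemma card_edg (S : Finset V) : (edg S).card = S.card.choose 2 := by
  induction S using Finset.induction_on with
  | empty => simp [edg]
  | @insert a S ha ih =>
    rw [edg_insert ha, Finset.card_union_of_disjoint, ih, Finset.card_image_of_injOn,
      Finset.card_insert_of_notMem ha]
    · have h1 : (S.card + 1).choose 2 = S.card.choose 1 + S.card.choose 2 :=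
        Nat.choose_succ_succ _ _
      rw [h1, Nat.choose_one_right]
      omega
    · intro x hx y hy hxy
      rw [Sym2.eq_iff] at hxy
      rcases hxy with ⟨-, h⟩ | ⟨h1, h2⟩
      · exact h
      · exact absurd (Finset.mem_coe.1 (h2 ▸ hx)) ha
    · refine Finset.disjoint_left.2 fun e he he' => ?_
      obtain ⟨b, hb, rfl⟩ := Finset.mem_image.1 he'
      exact ha (mem_edg_mk.1 he).1.1

lemma card_edg_three {T : Finset V} (h : T.card = 3) : (edg T).card = 3 := by
  rw [card_edg, h]; rfl

end edg


section master
variable {V : Type*} [Fintype V] [DecidableEq V]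

/-- the full edge "sample space" -/
def Kfull (V : Type*) [Fintype V] [DecidableEq V] : Finset (Sym2 V) :=
  Finset.univ.filter (fun e => ¬ e.IsDiag)

lemma edg_subset_Kfull (T : Finset V) : edg T ⊆ Kfull V := by
  intro e he
  simp only [Kfull, Finset.mem_filter, Finset.mem_univ, true_and]
  exact (Finset.mem_filter.1 he).2

/-- a "good family" for an edge set `A`: edge-disjoint triangles all of whose edges lie in `A` -/
def goodFam (A : Finset (Sym2 V)) (F : Finset (Finset V)) : Prop :=
  (∀ T ∈ F, T.card = 3 ∧ edg T ⊆ A) ∧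
  (∀ T ∈ F, ∀ T' ∈ F, T ≠ T' → Disjoint (edg T) (edg T'))

lemma exists_maxFam (A : Finset (Sym2 V)) :
    ∃ F, goodFam A F ∧ ∀ F', goodFam A F' → F'.card ≤ F.card := by
  obtain ⟨F, hF, hmax⟩ := Finset.exists_max_image
    ((Finset.univ : Finset (Finset (Finset V))).filter (goodFam A)) Finset.card
    ⟨∅, by simp [goodFam]⟩
  exact ⟨F, (Finset.mem_filter.1 hF).2,
    fun F' hF' => hmax F' (Finset.mem_filter.2 ⟨Finset.mem_univ _, hF'⟩)⟩

lemma edg_triple {a b c : V} :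
    edg ({a, b, c} : Finset V) ⊆ {s(a, b), s(a, c), s(b, c)} := by
  intro e he
  induction e with
  | _ x y =>
    obtain ⟨⟨hx, hy⟩, hxy⟩ := mem_edg_mk.1 he
    simp only [Finset.mem_insert, Finset.mem_singleton] at hx hy ⊢
    rcases hx with rfl | rfl | rfl <;> rcases hy with rfl | rfl | rfl <;>
      simp_all [Sym2.eq_iff] <;> tauto

/-- the deleted graph -/
def Gdel (A : Finset (Sym2 V)) (F : Finset (Finset V)) : SimpleGraph V where
  Adj u v := u ≠ v ∧ s(u, v) ∈ A ∧ ∀ T ∈ F, ¬ (u ∈ T ∧ v ∈ T)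
  symm := by
    refine ⟨fun u v h => ?_⟩
    refine ⟨h.1.symm, ?_, fun T hT hT2 => h.2.2 T hT ⟨hT2.2, hT2.1⟩⟩
    rw [Sym2.eq_swap]; exact h.2.1
  loopless := ⟨fun u h => h.1 rfl⟩

lemma Gdel_cliqueFree (A : Finset (Sym2 V)) (F : Finset (Finset V))
    (hgood : goodFam A F) (hmax : ∀ F', goodFam A F' → F'.card ≤ F.card) :
    (Gdel A F).CliqueFree 3 := by
  intro t ht
  rw [SimpleGraph.is3Clique_iff] at ht
  obtain ⟨a, b, c, hab, hac, hbc, rfl⟩ := ht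
  set T0 : Finset V := {a, b, c} with hT0
  have hT0card : T0.card = 3 := Finset.card_eq_three.2 ⟨a, b, c, hab.1, hac.1, hbc.1, rfl⟩
  have hT0edg : edg T0 ⊆ A := by
    intro e he
    rcases Finset.mem_insert.1 (edg_triple he) with rfl | h2
    · exact hab.2.1
    rcases Finset.mem_insert.1 h2 with rfl | h3
    · exact hac.2.1
    rw [Finset.mem_singleton] at h3
    subst h3
    exact hbc.2.1
  have hT0new : T0 ∉ F := fun h =>
    hab.2.2 T0 h ⟨by simp [hT0], by simp [hT0]⟩
  have hdisj : ∀ T ∈ F, Disjoint (edg T0) (edg T) := by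
    intro T hT
    refine Finset.disjoint_left.2 fun e he he' => ?_
    induction e with
    | _ x y =>
      obtain ⟨⟨hx, hy⟩, hxy⟩ := mem_edg_mk.1 he'
      obtain ⟨⟨hx0, hy0⟩, -⟩ := mem_edg_mk.1 he
      simp only [hT0, Finset.mem_insert, Finset.mem_singleton] at hx0 hy0
      rcases hx0 with rfl | rfl | rfl <;> rcases hy0 with rfl | rfl | rfl <;>
        first
          | exact absurd rfl hxy
          | exact hab.2.2 T hT ⟨hx, hy⟩
          | exact hab.2.2 T hT ⟨hy, hx⟩
          | exact hac.2.2 T hT ⟨hx, hy⟩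
          | exact hac.2.2 T hT ⟨hy, hx⟩
          | exact hbc.2.2 T hT ⟨hx, hy⟩
          | exact hbc.2.2 T hT ⟨hy, hx⟩
  have hgood' : goodFam A (insert T0 F) := by
    constructor
    · intro T hT
      rcases Finset.mem_insert.1 hT with rfl | hT
      · exact ⟨hT0card, hT0edg⟩
      · exact hgood.1 T hT
    · intro T hT T' hT' hne
      rcases Finset.mem_insert.1 hT with rfl | hT1 <;>
        rcases Finset.mem_insert.1 hT' with rfl | hT2
      · exact absurd rfl hne
      · exact hdisj T' hT2
      · exact (hdisj T hT1).symm
      · exact hgood.2 T hT1 T' hT2 hne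
  have := hmax _ hgood'
  rw [Finset.card_insert_of_notMem hT0new] at this
  omega

end master


section counting
variable {V : Type*} [Fintype V] [DecidableEq V]

lemma TS_card_le (S : Finset V) (k : ℕ) (hS : S.card = k) :
    ((Finset.univ : Finset (Finset V)).filter
      (fun T => T.card = 3 ∧ 2 ≤ (T ∩ S).card)).card ≤ k * k * Fintype.card V := by
  classical
  set TS := (Finset.univ : Finset (Finset V)).filter
      (fun T => T.card = 3 ∧ 2 ≤ (T ∩ S).card) with hTS
  have hsub : TS ⊆ ((S ×ˢ S) ×ˢ Finset.univ).image
      (fun x : (V × V) × V => insert x.1.1 (insert x.1.2 ({x.2} : Finset V))) := by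
    intro T hT
    simp only [hTS, Finset.mem_filter] at hT
    obtain ⟨-, hT3, hT2⟩ := hT
    obtain ⟨a, b, ha, hb, hab⟩ := Finset.one_lt_card_iff.1 (lt_of_lt_of_le one_lt_two hT2)
    have haT : a ∈ T := (Finset.mem_inter.1 ha).1
    have hbT : b ∈ T := (Finset.mem_inter.1 hb).1
    have hsub2 : ({a, b} : Finset V) ⊆ T := by
      intro x hx
      rcases Finset.mem_insert.1 hx with rfl | hx
      · exact haT
      · rw [Finset.mem_singleton] at hx; subst hx; exact hbT
    have hcard2 : ({a, b} : Finset V).card = 2 := by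
      rw [Finset.card_insert_of_notMem (by simpa using hab), Finset.card_singleton]
    have : 0 < (T \ {a, b}).card := by
      rw [Finset.card_sdiff_of_subset hsub2, hcard2, hT3]
      omega
    obtain ⟨x, hx⟩ := Finset.card_pos.1 this
    obtain ⟨hxT, hxab⟩ := Finset.mem_sdiff.1 hx
    refine Finset.mem_image.2 ⟨((a, b), x), ?_, ?_⟩
    · refine Finset.mem_product.2 ⟨Finset.mem_product.2
        ⟨(Finset.mem_inter.1 ha).2, (Finset.mem_inter.1 hb).2⟩, Finset.mem_univ _⟩
    · have hsub3 : ({a, b, x} : Finset V) ⊆ T := by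
        intro y hy
        rcases Finset.mem_insert.1 hy with rfl | hy
        · exact haT
        rcases Finset.mem_insert.1 hy with rfl | hy
        · exact hbT
        · rw [Finset.mem_singleton] at hy; subst hy; exact hxT
      have hcard3 : ({a, b, x} : Finset V).card = 3 := by
        rw [Finset.card_insert_of_notMem, Finset.card_insert_of_notMem, Finset.card_singleton]
        · simp only [Finset.mem_singleton]
          intro h
          exact hxab (by simp [h])
        · simp only [Finset.mem_insert, Finset.mem_singleton]
          rintro (rfl | h)
          · exact hab rfl
          · exact hxab (by simp [h])
      show ({a, b, x} : Finset V) = T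
      exact Finset.eq_of_subset_of_card_le hsub3 (by omega)
  calc TS.card ≤ _ := Finset.card_le_card hsub
    _ ≤ ((S ×ˢ S) ×ˢ (Finset.univ : Finset V)).card := Finset.card_image_le
    _ = k * k * Fintype.card V := by
      rw [Finset.card_product, Finset.card_product, hS, Finset.card_univ]

lemma master (p q : ℝ) (hp : 0 < p) (hq : 0 ≤ q) (hpq : p + q = 1) (k m j : ℕ)
    (hjm : 3 * j ≤ m)
    (H : ((Fintype.card V).choose k : ℝ) *
        (2 ^ m * (p / 2 + q) ^ k.choose 2
          + ((k * k * Fintype.card V).choose j : ℝ) * p ^ (3 * j)) < 1) :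
    ∃ G : SimpleGraph V, G.CliqueFree 3 ∧
      ∀ S : Finset V, S.card = k → ∃ u ∈ S, ∃ v ∈ S, G.Adj u v := by
  classical
  choose fam hfamgood hfammax using fun A : Finset (Sym2 V) => exists_maxFam A
  set K : Finset (Sym2 V) := Kfull V with hK
  set w : Finset (Sym2 V) → ℝ := wt p q K with hw
  have w0 : ∀ A, 0 ≤ w A := by
    intro A
    simp only [hw, wt]
    positivity
  suffices hsuff : ∃ A ∈ K.powerset,
      ∀ S : Finset V, S.card = k → ∃ u ∈ S, ∃ v ∈ S, (Gdel A (fam A)).Adj u v by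
    obtain ⟨A, -, hA⟩ := hsuff
    exact ⟨Gdel A (fam A), Gdel_cliqueFree A (fam A) (hfamgood A) (hfammax A), hA⟩
  by_contra hcon
  push_neg at hcon
  have hcover : ∀ A ∈ K.powerset, ∃ S ∈ Finset.univ.powersetCard k,
      ∀ u ∈ S, ∀ v ∈ S, ¬ (Gdel A (fam A)).Adj u v := by
    intro A hA
    obtain ⟨S, hSk, hS⟩ := hcon A hA
    refine ⟨S, Finset.mem_powersetCard.2 ⟨Finset.subset_univ _, hSk⟩, ?_⟩
    intro u hu v hv hadj
    exact (hS u hu v hv) hadj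
  have hub := union_bound (P := K.powerset) (s := Finset.univ.powersetCard k)
    (Q := fun S A => ∀ u ∈ S, ∀ v ∈ S, ¬ (Gdel A (fam A)).Adj u v)
    (w := w) (fun A _ => w0 A) hcover
  have hsum1 : ∑ A ∈ K.powerset, w A = 1 := by
    rw [hw, sum_wt, hpq, one_pow]
  -- the per-S bound
  have hperS : ∀ S ∈ (Finset.univ : Finset V).powersetCard k,
      ∑ A ∈ K.powerset,
          Set.indicator {A | ∀ u ∈ S, ∀ v ∈ S, ¬ (Gdel A (fam A)).Adj u v} w A
        ≤ 2 ^ m * (p / 2 + q) ^ k.choose 2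
          + ((k * k * Fintype.card V).choose j : ℝ) * p ^ (3 * j) := by
    intro S hSmem
    have hSk : S.card = k := (Finset.mem_powersetCard.1 hSmem).2
    have hESK : edg S ⊆ K := edg_subset_Kfull S
    set TS := (Finset.univ : Finset (Finset V)).filter
        (fun T => T.card = 3 ∧ 2 ≤ (T ∩ S).card) with hTSdef
    set FamS := (TS.powersetCard j).filter
        (fun F => ∀ T ∈ F, ∀ T' ∈ F, T ≠ T' → Disjoint (edg T) (edg T')) with hFamSdef
    rw [Finset.sum_indicator_eq_sum_filter]
    -- split the event
    have hsubset : K.powerset.filter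
          (fun A => A ∈ {A | ∀ u ∈ S, ∀ v ∈ S, ¬ (Gdel A (fam A)).Adj u v})
        ⊆ K.powerset.filter (fun A => (A ∩ edg S).card < m)
          ∪ K.powerset.filter (fun A => ∃ F ∈ FamS, F.biUnion edg ⊆ A) := by
      intro A hA
      simp only [Finset.mem_filter, Set.mem_setOf_eq] at hA
      obtain ⟨hAK, hind⟩ := hA
      by_cases hlowc : (A ∩ edg S).card < m
      · exact Finset.mem_union_left _ (Finset.mem_filter.2 ⟨hAK, hlowc⟩)
      push_neg at hlowc
      set FS := (fam A).filter (fun T => 2 ≤ (T ∩ S).card) with hFSdef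
      have hcov : A ∩ edg S ⊆ FS.biUnion edg := by
        intro e he
        obtain ⟨heA, heS⟩ := Finset.mem_inter.1 he
        clear he
        revert heA heS
        induction e with
        | _ x y =>
          intro heA heS
          obtain ⟨⟨hxS, hyS⟩, hxy⟩ := mem_edg_mk.1 heS
          have hnadj := hind x hxS y hyS
          have hex : ∃ T ∈ fam A, x ∈ T ∧ y ∈ T := by
            by_contra hno
            push_neg at hno
            refine hnadj ⟨hxy, heA, fun T hT hmem => ?_⟩
            obtain ⟨hxT, hyT⟩ := hmem
            exact (hno T hT hxT) hyT
          obtain ⟨T, hT, hxT, hyT⟩ := hex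
          refine Finset.mem_biUnion.2 ⟨T, ?_, mem_edg_mk.2 ⟨⟨hxT, hyT⟩, hxy⟩⟩
          refine Finset.mem_filter.2 ⟨hT, ?_⟩
          have hsub2 : ({x, y} : Finset V) ⊆ T ∩ S := by
            intro z hz
            rcases Finset.mem_insert.1 hz with rfl | hz
            · exact Finset.mem_inter.2 ⟨hxT, hxS⟩
            · rw [Finset.mem_singleton] at hz
              subst hz
              exact Finset.mem_inter.2 ⟨hyT, hyS⟩
          have hc2 : ({x, y} : Finset V).card = 2 := by
            rw [Finset.card_insert_of_notMem (by simpa using hxy), Finset.card_singleton]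
          calc 2 = ({x, y} : Finset V).card := hc2.symm
            _ ≤ (T ∩ S).card := Finset.card_le_card hsub2
      have h3m : m ≤ 3 * FS.card := by
        have step : ∑ T ∈ FS, (edg T).card ≤ ∑ _T ∈ FS, 3 := by
          refine Finset.sum_le_sum fun T hT => ?_
          have hTfam : T ∈ fam A := (Finset.mem_filter.1 hT).1
          exact le_of_eq (card_edg_three ((hfamgood A).1 T hTfam).1)
        have : m ≤ (FS.biUnion edg).card :=
          hlowc.trans (Finset.card_le_card hcov)
        have h2 := this.trans (Finset.card_biUnion_le.trans step)
        rw [Finset.sum_const, smul_eq_mul] at h2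
        omega
      have hjFS : j ≤ FS.card := by omega
      obtain ⟨F, hFsub, hFcard⟩ := Finset.exists_subset_card_eq hjFS
      have hFfam : ∀ T ∈ F, T ∈ fam A := fun T hT => (Finset.mem_filter.1 (hFsub hT)).1
      refine Finset.mem_union_right _ (Finset.mem_filter.2 ⟨hAK, F, ?_, ?_⟩)
      · refine Finset.mem_filter.2 ⟨Finset.mem_powersetCard.2 ⟨?_, hFcard⟩, ?_⟩
        · intro T hT
          refine Finset.mem_filter.2 ⟨Finset.mem_univ _, ((hfamgood A).1 T (hFfam T hT)).1,
            (Finset.mem_filter.1 (hFsub hT)).2⟩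
        · intro T hT T' hT' hne
          exact (hfamgood A).2 T (hFfam T hT) T' (hFfam T' hT') hne
      · intro e he
        obtain ⟨T, hT, heT⟩ := Finset.mem_biUnion.1 he
        exact ((hfamgood A).1 T (hFfam T hT)).2 heT
    -- bound the two parts
    have hsplit : ∑ A ∈ K.powerset.filter
          (fun A => A ∈ {A | ∀ u ∈ S, ∀ v ∈ S, ¬ (Gdel A (fam A)).Adj u v}), w A
        ≤ ∑ A ∈ K.powerset.filter (fun A => (A ∩ edg S).card < m), w A
          + ∑ A ∈ K.powerset.filter (fun A => ∃ F ∈ FamS, F.biUnion edg ⊆ A), w A := by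
      refine (Finset.sum_le_sum_of_subset_of_nonneg hsubset fun A _ _ => w0 A).trans ?_
      have := Finset.sum_union_inter
        (s₁ := K.powerset.filter (fun A => (A ∩ edg S).card < m))
        (s₂ := K.powerset.filter (fun A => ∃ F ∈ FamS, F.biUnion edg ⊆ A)) (f := w)
      have hnn : 0 ≤ ∑ A ∈ (K.powerset.filter (fun A => (A ∩ edg S).card < m)
          ∩ K.powerset.filter (fun A => ∃ F ∈ FamS, F.biUnion edg ⊆ A)), w A :=
        Finset.sum_nonneg fun A _ => w0 A
      linarith
    refine hsplit.trans (add_le_add ?_ ?_)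
    · -- Chernoff part
      have hlow := sum_wt_low (E := edg S) (M := K) p q hESK hp.le hq m
      rw [hpq, one_pow, mul_one, card_edg, hSk] at hlow
      exact hlow
    · -- family part
      have hcover2 : ∀ A ∈ K.powerset.filter (fun A => ∃ F ∈ FamS, F.biUnion edg ⊆ A),
          ∃ F ∈ FamS, F.biUnion edg ⊆ A := fun A hA => (Finset.mem_filter.1 hA).2
      have hub2 := union_bound (w := w) (fun A _ => w0 A) hcover2
      refine hub2.trans ?_
      have hperF : ∀ F ∈ FamS,
          ∑ A ∈ K.powerset.filter (fun A => ∃ F ∈ FamS, F.biUnion edg ⊆ A),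
            Set.indicator {A | F.biUnion edg ⊆ A} w A ≤ p ^ (3 * j) := by
        intro F hF
        obtain ⟨hFpc, hFdisj⟩ := Finset.mem_filter.1 hF
        obtain ⟨hFsubTS, hFcard⟩ := Finset.mem_powersetCard.1 hFpc
        have hcard3 : ∀ T ∈ F, (edg T).card = 3 := by
          intro T hT
          exact card_edg_three ((Finset.mem_filter.1 (hFsubTS hT)).2).1
        have hcardB : (F.biUnion edg).card = 3 * j := by
          rw [Finset.card_biUnion hFdisj]
          rw [Finset.sum_congr rfl hcard3, Finset.sum_const, smul_eq_mul, hFcard]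
          ring
        have hBK : F.biUnion edg ⊆ K := by
          intro e he
          obtain ⟨T, hT, heT⟩ := Finset.mem_biUnion.1 he
          exact edg_subset_Kfull T heT
        calc ∑ A ∈ K.powerset.filter (fun A => ∃ F ∈ FamS, F.biUnion edg ⊆ A),
              Set.indicator {A | F.biUnion edg ⊆ A} w A
            ≤ ∑ A ∈ K.powerset, Set.indicator {A | F.biUnion edg ⊆ A} w A := by
              refine Finset.sum_le_sum_of_subset_of_nonneg (Finset.filter_subset _ _)
                fun A _ _ => ?_
              exact Set.indicator_nonneg (fun A _ => w0 A) A
          _ = ∑ A ∈ K.powerset.filter (fun A => F.biUnion edg ⊆ A), w A := by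
              rw [Finset.sum_indicator_eq_sum_filter]
              rfl
          _ = p ^ (3 * j) := by
              have := sum_wt_superset (E := F.biUnion edg) (M := K) p q hBK
              rw [hpq, one_pow, mul_one, hcardB] at this
              exact this
      calc ∑ F ∈ FamS, ∑ A ∈ K.powerset.filter (fun A => ∃ F ∈ FamS, F.biUnion edg ⊆ A),
            Set.indicator {A | F.biUnion edg ⊆ A} w A
          ≤ ∑ _F ∈ FamS, p ^ (3 * j) := Finset.sum_le_sum hperF
        _ = FamS.card * p ^ (3 * j) := by rw [Finset.sum_const, nsmul_eq_mul]
        _ ≤ ((k * k * Fintype.card V).choose j : ℝ) * p ^ (3 * j) := by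
            refine mul_le_mul_of_nonneg_right ?_ (by positivity)
            have h1 : FamS.card ≤ (TS.powersetCard j).card :=
              Finset.card_le_card (Finset.filter_subset _ _)
            rw [Finset.card_powersetCard] at h1
            have h2 : TS.card.choose j ≤ (k * k * Fintype.card V).choose j :=
              Nat.choose_le_choose j (TS_card_le S k hSk)
            exact_mod_cast h1.trans h2
  -- combine
  have hfinal : (1 : ℝ) ≤ ((Fintype.card V).choose k : ℝ) *
      (2 ^ m * (p / 2 + q) ^ k.choose 2
        + ((k * k * Fintype.card V).choose j : ℝ) * p ^ (3 * j)) := by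
    rw [← hsum1]
    refine hub.trans ?_
    calc ∑ S ∈ (Finset.univ : Finset V).powersetCard k, ∑ A ∈ K.powerset,
          Set.indicator {A | ∀ u ∈ S, ∀ v ∈ S, ¬ (Gdel A (fam A)).Adj u v} w A
        ≤ ∑ _S ∈ (Finset.univ : Finset V).powersetCard k,
          (2 ^ m * (p / 2 + q) ^ k.choose 2
            + ((k * k * Fintype.card V).choose j : ℝ) * p ^ (3 * j)) :=
          Finset.sum_le_sum hperS
      _ = _ := by
          rw [Finset.sum_const, Finset.card_powersetCard, Finset.card_univ, nsmul_eq_mul]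
  linarith

end counting


section numeric

/-- `j ^ j ≤ e ^ j * j!` -/
lemma pow_self_le_exp_mul_factorial (j : ℕ) :
    (j : ℝ) ^ j ≤ Real.exp 1 ^ j * (j.factorial : ℝ) := by
  induction j with
  | zero => simp
  | succ n ih =>
    have hnn : (0:ℝ) ≤ n := Nat.cast_nonneg n
    have key : ((n:ℝ) + 1) ^ n ≤ Real.exp 1 * (n:ℝ) ^ n := by
      rcases Nat.eq_zero_or_pos n with rfl | hn
      · simp only [Nat.cast_zero, pow_zero, mul_one]
        linarith [Real.add_one_le_exp (1:ℝ)]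
      · have hnpos : (0:ℝ) < n := by exact_mod_cast hn
        have h1 : (1 : ℝ) + 1 / n ≤ Real.exp (1 / n) := by
          have := Real.add_one_le_exp (1 / (n:ℝ))
          linarith
        have h2 : ((1 : ℝ) + 1 / n) ^ n ≤ Real.exp (1 / n) ^ n := by
          refine pow_le_pow_left₀ ?_ h1 n
          positivity
        have h3 : Real.exp (1 / (n:ℝ)) ^ n = Real.exp 1 := by
          rw [← Real.exp_nat_mul]
          congr 1
          field_simp
        have h4 : ((n:ℝ) + 1) ^ n = ((1 : ℝ) + 1 / n) ^ n * (n:ℝ) ^ n := by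
          rw [← mul_pow]
          congr 1
          field_simp
        rw [h4, ← h3]
        refine mul_le_mul_of_nonneg_right ?_ (by positivity)
        rw [h3]
        exact h2.trans_eq h3
    calc ((n + 1 : ℕ) : ℝ) ^ (n + 1) = ((n:ℝ) + 1) * ((n:ℝ) + 1) ^ n := by
          push_cast
          ring
      _ ≤ ((n:ℝ) + 1) * (Real.exp 1 * (n:ℝ) ^ n) := by
          refine mul_le_mul_of_nonneg_left key (by positivity)
      _ ≤ ((n:ℝ) + 1) * (Real.exp 1 * (Real.exp 1 ^ n * n.factorial)) := by
          refine mul_le_mul_of_nonneg_left (mul_le_mul_of_nonneg_left ih (by positivity))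
            (by positivity)
      _ = Real.exp 1 ^ (n + 1) * (((n:ℝ) + 1) * n.factorial) := by ring
      _ = Real.exp 1 ^ (n + 1) * ((n + 1).factorial : ℝ) := by
          rw [Nat.factorial_succ]
          push_cast
          ring

lemma choose_mul_pow_le {D jn : ℕ} (hj : 0 < jn) {x : ℝ} (hx : 0 ≤ x) :
    ((D.choose jn : ℕ) : ℝ) * x ^ jn ≤ (Real.exp 1 * D * x / jn) ^ jn := by
  have hjr : (0:ℝ) < jn := by exact_mod_cast hj
  have h1 : (D.choose jn : ℝ) * (jn:ℝ) ^ jn ≤ Real.exp 1 ^ jn * (D:ℝ) ^ jn := by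
    have hnat : D.choose jn * jn.factorial ≤ D ^ jn := by
      calc D.choose jn * jn.factorial = jn.factorial * D.choose jn := by ring
        _ = D.descFactorial jn := (Nat.descFactorial_eq_factorial_mul_choose D jn).symm
        _ ≤ D ^ jn := Nat.descFactorial_le_pow D jn
    calc (D.choose jn : ℝ) * (jn:ℝ) ^ jn
        ≤ (D.choose jn : ℝ) * (Real.exp 1 ^ jn * jn.factorial) := by
          refine mul_le_mul_of_nonneg_left (pow_self_le_exp_mul_factorial jn) (by positivity)
      _ = Real.exp 1 ^ jn * ((D.choose jn * jn.factorial : ℕ) : ℝ) := by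
          push_cast
          ring
      _ ≤ Real.exp 1 ^ jn * ((D ^ jn : ℕ) : ℝ) := by
          refine mul_le_mul_of_nonneg_left ?_ (by positivity)
          exact_mod_cast hnat
      _ = Real.exp 1 ^ jn * (D:ℝ) ^ jn := by push_cast; ring
  have expand : (Real.exp 1 * D * x / jn) ^ jn
      = (Real.exp 1 ^ jn * (D:ℝ) ^ jn) * x ^ jn / ((jn:ℝ) ^ jn) := by
    rw [div_pow, mul_pow, mul_pow]
  rw [expand, le_div_iff₀ (by positivity)]
  calc (D.choose jn : ℝ) * x ^ jn * (jn:ℝ) ^ jn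
      = ((D.choose jn : ℝ) * (jn:ℝ) ^ jn) * x ^ jn := by ring
    _ ≤ (Real.exp 1 ^ jn * (D:ℝ) ^ jn) * x ^ jn := by
        refine mul_le_mul_of_nonneg_right h1 (by positivity)

end numeric


set_option maxHeartbeats 1000000 in
theorem stmt11' :
    ∃ C : ℝ, 0 < C ∧ ∃ N : ℕ, ∀ n : ℕ, N ≤ n →
      ∃ G : SimpleGraph (Fin n), G.CliqueFree 3 ∧
        ∀ S : Finset (Fin n), S.card = ⌈C * Real.sqrt n * Real.log n⌉₊ →
          ∃ u ∈ S, ∃ v ∈ S, G.Adj u v := by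
  refine ⟨10000, by norm_num, 3, ?_⟩
  intro n hn
  have hn3 : (3:ℝ) ≤ (n:ℝ) := by exact_mod_cast hn
  have hnpos : (0:ℝ) < (n:ℝ) := by linarith
  set L := Real.log (n:ℝ) with hL
  set R := Real.sqrt (n:ℝ) with hR
  have hRpos : 0 < R := Real.sqrt_pos.2 hnpos
  have hR1 : 1 ≤ R := Real.one_le_sqrt.2 (by linarith)
  have hR2 : R * R = (n:ℝ) := Real.mul_self_sqrt (le_of_lt hnpos)
  have hL1 : 1 ≤ L := by
    rw [hL, Real.le_log_iff_exp_le hnpos]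
    have := Real.exp_one_lt_d9
    linarith
  set k := ⌈(10000:ℝ) * R * L⌉₊ with hk
  set p : ℝ := 1 / (200 * R) with hpdef
  set q : ℝ := 1 - p with hqdef
  have hp : 0 < p := by rw [hpdef]; positivity
  have hp1 : p ≤ 1/200 := by
    rw [hpdef, div_le_div_iff₀ (by positivity) (by norm_num)]
    nlinarith
  have hq : 0 ≤ q := by rw [hqdef]; linarith
  have hpq : p + q = 1 := by rw [hqdef]; ring
  set m := ⌈2*(k:ℝ)*L⌉₊ + 3 with hm
  set j := ⌈(2/3:ℝ)*(k:ℝ)*L⌉₊ with hj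
  have hk_low : 10000 * R * L ≤ (k:ℝ) := Nat.le_ceil _
  have hk_up : (k:ℝ) ≤ 10000 * R * L + 1 :=
    le_of_lt (Nat.ceil_lt_add_one (by positivity))
  have hk2 : (2:ℝ) ≤ (k:ℝ) := by nlinarith
  have hkL : 10000 ≤ (k:ℝ) * L := by nlinarith
  have hm_low : 2*(k:ℝ)*L + 3 ≤ (m:ℝ) := by
    rw [hm]
    push_cast
    linarith [Nat.le_ceil (2*(k:ℝ)*L)]
  have hm_up : (m:ℝ) ≤ 2*(k:ℝ)*L + 4 := by
    rw [hm]
    push_cast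
    linarith [Nat.ceil_lt_add_one (show (0:ℝ) ≤ 2*(k:ℝ)*L by positivity)]
  have hj_low : (2/3:ℝ)*(k:ℝ)*L ≤ (j:ℝ) := Nat.le_ceil _
  have hj_up : (j:ℝ) ≤ (2/3:ℝ)*(k:ℝ)*L + 1 :=
    le_of_lt (Nat.ceil_lt_add_one (by positivity))
  have hjpos : 0 < j := by
    have : (0:ℝ) < (j:ℝ) := by nlinarith
    exact_mod_cast this
  have h3jm : 3 * j ≤ m := by
    have : ((3 * j : ℕ):ℝ) ≤ ((m:ℕ):ℝ) := by
      push_cast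
      nlinarith [hj_up, Nat.le_ceil (2*(k:ℝ)*L)]
    exact_mod_cast this
  -- auxiliary exp facts
  have he2 : (2:ℝ) ≤ Real.exp 1 := by linarith [Real.add_one_le_exp (1:ℝ)]
  have hexpm2 : Real.exp (-2 : ℝ) ≤ 1/4 := by
    have h4 : (4:ℝ) ≤ Real.exp 2 := by
      have h2 : Real.exp (2:ℝ) = Real.exp 1 ^ (2:ℕ) := by
        rw [← Real.exp_nat_mul]
        norm_num
      rw [h2]
      nlinarith
    have := one_div_le_one_div_of_le (show (0:ℝ) < 4 by norm_num) h4
    rw [Real.exp_neg, ← one_div]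
    linarith
  -- the main numeric hypothesis
  have H : ((n.choose k : ℕ) : ℝ) *
      (2 ^ m * (p / 2 + q) ^ k.choose 2
        + (((k * k * n).choose j : ℕ) : ℝ) * p ^ (3 * j)) < 1 := by
    have hcast : ((n.choose k : ℕ) : ℝ) ≤ Real.exp ((k:ℝ)*L) := by
      calc ((n.choose k : ℕ):ℝ) ≤ ((n^k : ℕ):ℝ) := by exact_mod_cast Nat.choose_le_pow n k
        _ = (n:ℝ)^k := by push_cast; ring
        _ = Real.exp ((k:ℝ)*L) := by
            have h2 : Real.exp ((k:ℝ)*L) = Real.exp L ^ k := Real.exp_nat_mul L k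
            rw [h2, hL, Real.exp_log hnpos]
    -- term 1 (Chernoff part)
    have hterm1 : 2 ^ m * (p/2 + q) ^ k.choose 2
        ≤ Real.exp ((m:ℝ) - (p/2)*((k:ℝ)*((k:ℝ)-1)/2)) := by
      have h2m : (2:ℝ)^m ≤ Real.exp 1 ^ m := pow_le_pow_left₀ (by norm_num) he2 m
      have hbnn : (0:ℝ) ≤ p/2 + q := by rw [hqdef]; linarith
      have hble : p/2 + q ≤ Real.exp (-(p/2)) := by
        have := Real.add_one_le_exp (-(p/2))
        rw [hqdef]
        linarith
      have hb : (p/2 + q)^(k.choose 2) ≤ Real.exp (-(p/2)) ^ (k.choose 2) :=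
        pow_le_pow_left₀ hbnn hble _
      calc 2 ^ m * (p/2 + q) ^ k.choose 2
          ≤ Real.exp 1 ^ m * Real.exp (-(p/2)) ^ k.choose 2 := by
            refine mul_le_mul h2m hb (by positivity) (by positivity)
        _ = Real.exp ((m:ℝ)*1) * Real.exp ((k.choose 2 : ℕ) * (-(p/2))) := by
            rw [Real.exp_nat_mul, Real.exp_nat_mul]
        _ = Real.exp ((m:ℝ)*1 + (k.choose 2 : ℕ) * (-(p/2))) := (Real.exp_add _ _).symm
        _ = Real.exp ((m:ℝ) - (p/2)*((k:ℝ)*((k:ℝ)-1)/2)) := by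
            rw [Nat.cast_choose_two]
            congr 1
            ring
    have hRne : R ≠ 0 := ne_of_gt hRpos
    have hRp : R * p = 1/200 := by
      rw [hpdef]
      field_simp
    have hkp : 50 * L ≤ (k:ℝ) * p := by
      have h := mul_le_mul_of_nonneg_right hk_low hp.le
      nlinarith [hRp]
    have hexp1 : (k:ℝ)*L + ((m:ℝ) - (p/2)*((k:ℝ)*((k:ℝ)-1)/2)) ≤ -2 := by
      have hkm1 : (0:ℝ) ≤ ((k:ℝ)-1)/4 := by linarith
      have hprod := mul_le_mul_of_nonneg_left hkp hkm1
      have hLk2 : (0:ℝ) ≤ ((k:ℝ)-2)*L := mul_nonneg (by linarith) (by linarith)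
      nlinarith [hkL, hm_up, hL1, hk2]
    -- term 2 (family part)
    have hnp3 : (n:ℝ) * p^3 = 1 / (8000000 * R) := by
      rw [← hR2, hpdef]
      field_simp
      ring
    have he3 : Real.exp 1 ≤ 3 := by
      have := Real.exp_one_lt_d9
      linarith
    have h81 : (1:ℝ)/81 ≤ Real.exp (-4 : ℝ) := by
      have h4 : Real.exp (4:ℝ) ≤ 81 := by
        have h2 : Real.exp (4:ℝ) = Real.exp 1 ^ (4:ℕ) := by
          rw [← Real.exp_nat_mul]
          norm_num
        have h3 : Real.exp 1 ^ (4:ℕ) ≤ (3:ℝ) ^ (4:ℕ) :=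
          pow_le_pow_left₀ (Real.exp_pos 1).le he3 4
        rw [h2]
        calc Real.exp 1 ^ (4:ℕ) ≤ (3:ℝ) ^ (4:ℕ) := h3
          _ = 81 := by norm_num
      have h6 : (1:ℝ)/81 ≤ 1/Real.exp 4 := one_div_le_one_div_of_le (Real.exp_pos 4) h4
      rw [Real.exp_neg, ← one_div]
      exact h6
    have key : 243*(k:ℝ)*(k:ℝ) ≤ 8000000*R*(j:ℝ) := by
      have h8R : (0:ℝ) ≤ 8000000*R := by positivity
      have h1 := mul_le_mul_of_nonneg_left hj_low h8R
      have hknn : (0:ℝ) ≤ (k:ℝ) := by positivity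
      have h2 : (k:ℝ) * ((k:ℝ) - 1) ≤ (k:ℝ) * (10000*R*L) :=
        mul_le_mul_of_nonneg_left (by linarith) hknn
      nlinarith [hRpos, hL1, hk2, mul_pos hRpos (show (0:ℝ) < L by linarith)]
    have hbase : Real.exp 1 * (((k * k * n : ℕ)):ℝ) * p^3 / (j:ℝ) ≤ Real.exp (-4 : ℝ) := by
      have hDcast : (((k * k * n : ℕ)):ℝ) = (k:ℝ)*(k:ℝ)*(n:ℝ) := by push_cast; ring
      have hjr : (0:ℝ) < (j:ℝ) := by exact_mod_cast hjpos
      have hform : Real.exp 1 * ((k:ℝ)*(k:ℝ)*(n:ℝ)) * p^3 / (j:ℝ)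
          = Real.exp 1 * ((k:ℝ)*(k:ℝ)) * ((n:ℝ)*p^3) / (j:ℝ) := by ring
      rw [hDcast, hform, hnp3]
      have hform2 : Real.exp 1 * ((k:ℝ)*(k:ℝ)) * (1/(8000000*R)) / (j:ℝ)
          = (Real.exp 1 * (k:ℝ)*(k:ℝ))/(8000000*R*(j:ℝ)) := by
        field_simp
      rw [hform2]
      refine le_trans ?_ h81
      rw [div_le_div_iff₀ (by positivity) (by norm_num)]
      have hknn : (0:ℝ) ≤ (k:ℝ)*(k:ℝ) := by positivity
      nlinarith [key, mul_le_mul_of_nonneg_right he3 hknn]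
    have hterm2 : (((k * k * n).choose j : ℕ) : ℝ) * p ^ (3*j)
        ≤ Real.exp ((j:ℝ) * (-4)) := by
      have h1 : (((k * k * n).choose j : ℕ) : ℝ) * (p^3) ^ j
          ≤ (Real.exp 1 * ((k * k * n : ℕ):ℝ) * p^3 / (j:ℝ)) ^ j :=
        choose_mul_pow_le hjpos (by positivity)
      rw [pow_mul]
      refine h1.trans ?_
      calc (Real.exp 1 * ((k * k * n : ℕ):ℝ) * p^3 / (j:ℝ)) ^ j
          ≤ Real.exp (-4 : ℝ) ^ j := by
            refine pow_le_pow_left₀ ?_ hbase j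
            have h1 : (0:ℝ) ≤ ((k * k * n : ℕ):ℝ) := Nat.cast_nonneg _
            have h2 : (0:ℝ) ≤ (j:ℝ) := Nat.cast_nonneg _
            have h3 : (0:ℝ) ≤ p^3 := by positivity
            exact div_nonneg (mul_nonneg (mul_nonneg (Real.exp_pos 1).le h1) h3) h2
        _ = Real.exp ((j:ℝ) * (-4)) := (Real.exp_nat_mul _ _).symm
    have hexp2 : (k:ℝ)*L + (j:ℝ)*(-4) ≤ -2 := by nlinarith [hkL, hj_low]
    -- combine
    have hT1nn : (0:ℝ) ≤ 2 ^ m * (p/2 + q) ^ k.choose 2 := by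
      have : (0:ℝ) ≤ p/2 + q := by rw [hqdef]; linarith
      positivity
    have hT2nn : (0:ℝ) ≤ (((k * k * n).choose j : ℕ) : ℝ) * p ^ (3*j) := by positivity
    have hchnn : (0:ℝ) ≤ ((n.choose k : ℕ) : ℝ) := by positivity
    calc ((n.choose k : ℕ) : ℝ) *
        (2 ^ m * (p / 2 + q) ^ k.choose 2
          + (((k * k * n).choose j : ℕ) : ℝ) * p ^ (3 * j))
        ≤ Real.exp ((k:ℝ)*L) *
          (2 ^ m * (p / 2 + q) ^ k.choose 2
            + (((k * k * n).choose j : ℕ) : ℝ) * p ^ (3 * j)) := by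
          refine mul_le_mul_of_nonneg_right hcast (by linarith)
      _ = Real.exp ((k:ℝ)*L) * (2 ^ m * (p / 2 + q) ^ k.choose 2)
          + Real.exp ((k:ℝ)*L) * ((((k * k * n).choose j : ℕ) : ℝ) * p ^ (3 * j)) := by
          ring
      _ ≤ Real.exp ((k:ℝ)*L) * Real.exp ((m:ℝ) - (p/2)*((k:ℝ)*((k:ℝ)-1)/2))
          + Real.exp ((k:ℝ)*L) * Real.exp ((j:ℝ) * (-4)) := by
          refine add_le_add (mul_le_mul_of_nonneg_left hterm1 (Real.exp_pos _).le)
            (mul_le_mul_of_nonneg_left hterm2 (Real.exp_pos _).le)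
      _ = Real.exp ((k:ℝ)*L + ((m:ℝ) - (p/2)*((k:ℝ)*((k:ℝ)-1)/2)))
          + Real.exp ((k:ℝ)*L + (j:ℝ)*(-4)) := by
          rw [Real.exp_add, Real.exp_add]
      _ ≤ Real.exp (-2 : ℝ) + Real.exp (-2 : ℝ) := by
          refine add_le_add (Real.exp_le_exp.2 hexp1) (Real.exp_le_exp.2 hexp2)
      _ ≤ 1/4 + 1/4 := add_le_add hexpm2 hexpm2
      _ < 1 := by norm_num
  obtain ⟨G, hG1, hG2⟩ := Stmt11.master (V := Fin n) p q hp hq hpq k m j h3jm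
    (by simpa [Fintype.card_fin] using H)
  exact ⟨G, hG1, fun S hS => hG2 S hS⟩

end Stmt11


/-- There exists C > 0 such that for all sufficiently large n there is a
triangle-free graph G on [n] with no independent set of size ⌈C·√n·log n⌉ (equivalently,
r(3,k) = Ω(k²/log² k)). -/
theorem stmt11 :
    ∃ C : ℝ, 0 < C ∧ ∃ N : ℕ, ∀ n : ℕ, N ≤ n →
      ∃ G : SimpleGraph (Fin n), G.CliqueFree 3 ∧
        ∀ S : Finset (Fin n), S.card = ⌈C * Real.sqrt n * Real.log n⌉₊ →
          ∃ u ∈ S, ∃ v ∈ S, G.Adj u v := by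
  exact Stmt11.stmt11'
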